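/- Let f, g : ℝ → ℝ be twice differentiable functions with f′(x) > 0 for all x, g′(y) > 0 for all y, and f(x) + g(y) ≠ 0 for all x, y ∈ ℝ. Define u(x,y) = log( 2·f′(x)·g′(y) / (f(x)+g(y))² ). Then u solves the Liouville equation: for all (x,y) ∈ ℝ², ∂ᵧ(∂ₓu)(x,y) = e^{u(x,y)}. -/

import Mathlib

/-- Partial derivative of `u : ℝ² → ℝ` in the first variable. -/
noncomputable def pdx (u : ℝ × ℝ → ℝ) (p : ℝ × ℝ) : ℝ :=
  deriv (fun s => u (s, p.2)) p.1

/-- Partial derivative of `u : ℝ² → ℝ` in the second variable. -/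
noncomputable def pdy (u : ℝ × ℝ → ℝ) (p : ℝ × ℝ) : ℝ :=
  deriv (fun s => u (p.1, s)) p.2

/-- The classical Darboux-integration closed-form solution of the Liouville
equation `u_{xy} = e^u`: if `f, g : ℝ → ℝ` are twice differentiable with
`f′ > 0`, `g′ > 0` and `f(x) + g(y) ≠ 0` everywhere, then
`u(x,y) = log(2·f′(x)·g′(y)/(f(x)+g(y))²)` satisfies `∂ᵧ(∂ₓu) = e^u`. -/
theorem liouville_closed_form_solution (f g : ℝ → ℝ)
    (hf : Differentiable ℝ f) (hf' : Differentiable ℝ (deriv f))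
    (hg : Differentiable ℝ g) (hg' : Differentiable ℝ (deriv g))
    (hfpos : ∀ x, 0 < deriv f x) (hgpos : ∀ y, 0 < deriv g y)
    (hne : ∀ x y, f x + g y ≠ 0) :
    ∀ p : ℝ × ℝ,
      pdy (pdx (fun q : ℝ × ℝ =>
          Real.log (2 * deriv f q.1 * deriv g q.2 / (f q.1 + g q.2) ^ 2))) p
        = Real.exp (Real.log (2 * deriv f p.1 * deriv g p.2 / (f p.1 + g p.2) ^ 2)) := by
  intro p
  obtain ⟨x, y⟩ := p
  have hpdx : ∀ a b : ℝ, pdx (fun q : ℝ × ℝ =>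
      Real.log (2 * deriv f q.1 * deriv g q.2 / (f q.1 + g q.2) ^ 2)) (a, b)
      = deriv (deriv f) a / deriv f a - 2 * deriv f a / (f a + g b) := by
    intro a b
    have hc : (0:ℝ) < deriv g b := hgpos b
    have hd : f a + g b ≠ 0 := hne a b
    have heq : (fun s => (fun q : ℝ × ℝ =>
        Real.log (2 * deriv f q.1 * deriv g q.2 / (f q.1 + g q.2) ^ 2)) (s, b))
        = fun s => Real.log (2 * deriv f s * deriv g b) - Real.log ((f s + g b) ^ 2) := by
      funext s
      have h1 : (0:ℝ) < 2 * deriv f s * deriv g b := by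
        have := hfpos s; positivity
      exact Real.log_div h1.ne' (pow_ne_zero 2 (hne s b))
    rw [pdx]
    simp only [heq]
    have h1 : HasDerivAt (fun s => 2 * deriv f s * deriv g b)
        (2 * deriv (deriv f) a * deriv g b) a := by
      simpa [mul_comm, mul_assoc] using
        (((hf' a).hasDerivAt.const_mul 2).mul_const (deriv g b))
    have h2 : HasDerivAt (fun s => (f s + g b) ^ 2)
        (2 * (f a + g b) ^ 1 * deriv f a) a := by
      exact ((hf a).hasDerivAt.add_const _).pow 2
    have hL : HasDerivAt (fun s => Real.log (2 * deriv f s * deriv g b)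
        - Real.log ((f s + g b) ^ 2))
        ((2 * deriv (deriv f) a * deriv g b) / (2 * deriv f a * deriv g b)
          - (2 * (f a + g b) ^ 1 * deriv f a) / ((f a + g b) ^ 2)) a := by
      have hpos : (2 : ℝ) * deriv f a * deriv g b ≠ 0 := by
        have := hfpos a; positivity
      exact (h1.log hpos).sub (h2.log (pow_ne_zero 2 hd))
    rw [hL.deriv]
    have hfa : deriv f a ≠ 0 := (hfpos a).ne'
    field_simp
  have hfun : (fun t => pdx (fun q : ℝ × ℝ =>
      Real.log (2 * deriv f q.1 * deriv g q.2 / (f q.1 + g q.2) ^ 2)) (x, t))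
      = fun t => deriv (deriv f) x / deriv f x - 2 * deriv f x * (f x + g t)⁻¹ := by
    funext t
    rw [hpdx x t]
    ring
  rw [pdy]
  simp only [hfun]
  have h3 : HasDerivAt (fun t => f x + g t) (deriv g y) y := (hg y).hasDerivAt.const_add _
  have h4 : HasDerivAt (fun t => (f x + g t)⁻¹)
      (-(deriv g y) / (f x + g y) ^ 2) y := h3.inv (hne x y)
  have h5 : HasDerivAt (fun t => deriv (deriv f) x / deriv f x
      - 2 * deriv f x * (f x + g t)⁻¹)
      (2 * deriv f x * deriv g y / (f x + g y) ^ 2) y := by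
    have h6 := (h4.const_mul (2 * deriv f x)).const_sub (deriv (deriv f) x / deriv f x)
    convert h6 using 1
    have hd : f x + g y ≠ 0 := hne x y
    show (2 * deriv f x * deriv g y / (f x + g y) ^ 2 : ℝ) = -(2 * deriv f x * (-deriv g y / (f x + g y) ^ 2))
    ring
    exact rfl
    exact rfl
  rw [h5.deriv]
  have hpos : (0:ℝ) < 2 * deriv f x * deriv g y / (f x + g y) ^ 2 := by
    have h7 := hfpos x
    have h8 := hgpos y
    have h9 : (0:ℝ) < (f x + g y) ^ 2 := by
      have := hne x y; positivity
    exact div_pos (by positivity) h9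
  rw [Real.exp_log hpos]
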